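/- arXiv:1904.10668 — 2 statements merged into one kernel-verified Lean document; each statement's English description precedes it below -/
import Mathlib

section
/- (Density of asymptotic lattices as ℏ → 0.) Let (𝓛_ℏ, 𝓘, B) be an asymptotic lattice. For every c ∈ B there exist a constant C > 0, ℏ₀ > 0, and a family (λ_ℏ)_{ℏ∈𝓘∩(0,ℏ₀]} with λ_ℏ ∈ 𝓛_ℏ and ‖λ_ℏ − c‖ ≤ C·ℏ for all ℏ ∈ 𝓘 ∩ (0,ℏ₀]. -/
open Set Metric
open scoped Topology

noncomputable section

/-- Euclidean space `ℝⁿ`. -/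
abbrev Eucl (n : ℕ) : Type := EuclideanSpace ℝ (Fin n)

/-- The point of `ℝⁿ` with integer coordinates `k`. -/
def intVec {n : ℕ} (k : Fin n → ℤ) : Eucl n := WithLp.toLp 2 (fun i => (k i : ℝ))

/-- The family `Gh ℏ` admits the asymptotic expansion `∑_j ℏ^j • Gc j` in the
`C^∞(U)` topology, uniformly for `ℏ ∈ 𝓘`. -/
def HasCinftyExpansion {n m : ℕ} (I : Set ℝ) (U : Set (Eucl n))
    (Gh : ℝ → Eucl n → Eucl m) (Gc : ℕ → Eucl n → Eucl m) : Prop :=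
  (∀ h ∈ I, ContDiffOn ℝ (⊤ : ℕ∞) (Gh h) U) ∧
  (∀ j : ℕ, ContDiffOn ℝ (⊤ : ℕ∞) (Gc j) U) ∧
  ∀ (N : ℕ) (K : Set (Eucl n)), K ⊆ U → IsCompact K → ∀ d : ℕ,
    ∃ C > 0, ∀ h ∈ I, ∀ x ∈ K,
      ‖iteratedFDerivWithin ℝ d
        (fun y => Gh h y - ∑ j ∈ Finset.range (N + 1), h ^ j • Gc j y) U x‖
        ≤ C * h ^ (N + 1)

/-- `G0` is a smooth diffeomorphism from `U` onto an open set containing the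
closure of `B`. -/
structure IsDiffeoOntoNbhd {n : ℕ} (G0 : Eucl n → Eucl n) (U B : Set (Eucl n)) : Prop where
  contDiffOn : ContDiffOn ℝ (⊤ : ℕ∞) G0 U
  injOn : InjOn G0 U
  isOpen_image : IsOpen (G0 '' U)
  closure_subset_image : closure B ⊆ G0 '' U
  smooth_inv : ∃ F0 : Eucl n → Eucl n, ContDiffOn ℝ (⊤ : ℕ∞) F0 (G0 '' U) ∧
      ∀ x ∈ U, F0 (G0 x) = x

/-- `(Gh, U)` (with expansion coefficients `Gc`) is an asymptotic chart for the
family `L` of subsets of `B`. -/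
structure IsAsymptoticChart {n : ℕ} (I : Set ℝ) (B : Set (Eucl n))
    (L : ℝ → Set (Eucl n)) (Gh : ℝ → Eucl n → Eucl n) (Gc : ℕ → Eucl n → Eucl n)
    (U : Set (Eucl n)) : Prop where
  isOpen_U : IsOpen U
  bounded_U : Bornology.IsBounded U
  expansion : HasCinftyExpansion I U Gh Gc
  diffeo : IsDiffeoOntoNbhd (Gc 0) U B
  orientation : ∀ x ∈ U, 0 < LinearMap.det ((fderiv ℝ (Gc 0) x) : Eucl n →ₗ[ℝ] Eucl n)
  bounds : ∃ C : ℕ → ℝ, (∀ N, 0 < C N) ∧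
    (∀ h ∈ I, ∀ lam ∈ L h, ∃ k : Fin n → ℤ, h • intVec k ∈ U ∧
      ∀ N : ℕ, ‖lam - Gh h (h • intVec k)‖ ≤ C N * h ^ N) ∧
    (∀ U₀ : Set (Eucl n), IsOpen U₀ → IsCompact (closure U₀) →
      closure U₀ ⊆ U ∩ (Gc 0) ⁻¹' B →
      ∃ h₁ > 0, ∀ h ∈ I, h ≤ h₁ → ∀ k : Fin n → ℤ, h • intVec k ∈ U₀ →
        ∃ lam ∈ L h, ∀ N : ℕ, ‖lam - Gh h (h • intVec k)‖ ≤ C N * h ^ N)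

/-- `(L, I, B)` is an asymptotic lattice. -/
structure IsAsymptoticLattice {n : ℕ} (L : ℝ → Set (Eucl n)) (I : Set ℝ)
    (B : Set (Eucl n)) : Prop where
  I_pos : I ⊆ Ioi 0
  I_accum : (0 : ℝ) ∈ closure I
  isOpen_B : IsOpen B
  bounded_B : Bornology.IsBounded B
  connected_B : IsConnected B
  simplyConnected_B : SimplyConnectedSpace B
  subset_B : ∀ h ∈ I, L h ⊆ B
  separation : ∃ h₀ > 0, ∃ ε₀ > 0, ∃ N₀ : ℕ, 1 ≤ N₀ ∧
    ∀ h ∈ I, h ≤ h₀ → ∀ l₁ ∈ L h, ∀ l₂ ∈ L h, l₁ ≠ l₂ → ε₀ * h ^ N₀ ≤ ‖l₁ - l₂‖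
  chart : ∃ (Gh : ℝ → Eucl n → Eucl n) (Gc : ℕ → Eucl n → Eucl n) (U : Set (Eucl n)),
    IsAsymptoticChart I B L Gh Gc U

/-- A good labelling of the lattice `L` associated with the asymptotic chart `(Gh, U)`. -/
def IsGoodLabelling {n : ℕ} (I : Set ℝ) (L : ℝ → Set (Eucl n))
    (Gh : ℝ → Eucl n → Eucl n) (U : Set (Eucl n))
    (k : ℝ → Eucl n → Fin n → ℤ) : Prop :=
  (∀ h ∈ I, ∀ lam ∈ L h, h • intVec (k h lam) ∈ U) ∧
  ∀ N : ℕ, ∃ C > 0, ∀ h ∈ I, ∀ lam ∈ L h,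
    ‖Gh h (h • intVec (k h lam)) - lam‖ ≤ C * h ^ N

/-- The index set `I` is `ℏ`-continuous. -/
def HContinuous (I : Set ℝ) : Prop :=
  ∀ ε > 0, ∃ h₀ > 0, ∀ h₁ ∈ closure I, 0 < h₁ → h₁ < h₀ →
    ∃ h₂ ∈ I, h₂ < h₁ ∧ 1 / h₂ - 1 / h₁ < ε

set_option maxHeartbeats 1000000 in
/-- (Density of asymptotic lattices as `ℏ → 0`.) For every `c ∈ B` there is a family
of lattice points at distance `O(ℏ)` from `c`. -/
theorem asymptotic_lattice_dense
    (n : ℕ) (hn : 1 ≤ n) (L : ℝ → Set (Eucl n)) (I : Set ℝ) (B : Set (Eucl n))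
    (hlat : IsAsymptoticLattice L I B) (c : Eucl n) (hc : c ∈ B) :
    ∃ C > 0, ∃ h₀ > 0, ∃ lamfam : ℝ → Eucl n,
      ∀ h ∈ I, h ≤ h₀ → lamfam h ∈ L h ∧ ‖lamfam h - c‖ ≤ C * h := by
  obtain ⟨Gh, Gc, U, chart⟩ := hlat.chart
  set G0 : Eucl n → Eucl n := Gc 0 with hG0def
  obtain ⟨x₀, hx₀U, hGx₀⟩ := chart.diffeo.closure_subset_image (subset_closure hc)
  have hVopen : IsOpen (U ∩ G0 ⁻¹' B) :=
    chart.diffeo.contDiffOn.continuousOn.isOpen_inter_preimage chart.isOpen_U hlat.isOpen_B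
  have hx₀V : x₀ ∈ U ∩ G0 ⁻¹' B := by
    refine ⟨hx₀U, ?_⟩
    show G0 x₀ ∈ B
    rw [hG0def, hGx₀]
    exact hc
  obtain ⟨r', hr', hball⟩ := Metric.isOpen_iff.1 hVopen x₀ hx₀V
  set r : ℝ := r' / 2 with hrdef
  have hr : 0 < r := by positivity
  have hcb : closedBall x₀ r ⊆ U ∩ G0 ⁻¹' B := by
    intro x hx
    exact hball (lt_of_le_of_lt (mem_closedBall.1 hx) (by simp [hrdef]; linarith))
  have hKU : closedBall x₀ r ⊆ U := fun x hx => (hcb hx).1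
  have hKcpt : IsCompact (closedBall x₀ r) := isCompact_closedBall _ _
  obtain ⟨Cb, hCb, _, hlow⟩ := chart.bounds
  have hcptcl : IsCompact (closure (ball x₀ r)) :=
    hKcpt.of_isClosed_subset isClosed_closure closure_ball_subset_closedBall
  obtain ⟨h₁, hh₁, hP⟩ := hlow (ball x₀ r) isOpen_ball hcptcl
    (closure_ball_subset_closedBall.trans hcb)
  obtain ⟨C₂, hC₂, hexp⟩ := chart.expansion.2.2 0 (closedBall x₀ r) hKU hKcpt 0
  -- Lipschitz bound for G0 on the closed ball
  obtain ⟨Cd, hCd⟩ := hKcpt.exists_bound_of_continuousOn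
    ((chart.diffeo.contDiffOn.continuousOn_fderiv_of_isOpen chart.isOpen_U (by exact_mod_cast le_top)).mono hKU)
  have hdiff : ∀ x ∈ closedBall x₀ r,
      HasFDerivWithinAt G0 (fderiv ℝ G0 x) (closedBall x₀ r) x := by
    intro x hx
    exact (((chart.diffeo.contDiffOn.differentiableOn (by simp)).differentiableAt
      (chart.isOpen_U.mem_nhds (hKU hx))).hasFDerivAt).hasFDerivWithinAt
  have hbound : ∀ x ∈ closedBall x₀ r, ‖fderiv ℝ G0 x‖ ≤ max Cd 0 :=
    fun x hx => le_trans (hCd x hx) (le_max_left _ _)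
  have hmvt : ∀ y ∈ closedBall x₀ r, ‖G0 y - G0 x₀‖ ≤ max Cd 0 * ‖y - x₀‖ := by
    intro y hy
    exact (convex_closedBall x₀ r).norm_image_sub_le_of_norm_hasFDerivWithin_le hdiff hbound
      (mem_closedBall_self hr.le) hy
  have hmax : (0:ℝ) ≤ max Cd 0 := le_max_right _ _
  have hsn : (0:ℝ) ≤ Real.sqrt n := Real.sqrt_nonneg _
  set C : ℝ := Cb 1 + C₂ + (max Cd 0 + 1) * (Real.sqrt n + 1) with hCdef
  have hCpos : 0 < C := by
    have := hCb 1
    nlinarith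
  set h₀ : ℝ := min h₁ (r / (Real.sqrt n + 1)) with hh₀def
  have hh₀pos : 0 < h₀ := lt_min hh₁ (by positivity)
  have key : ∀ h : ℝ, ∃ lam : Eucl n, h ∈ I → h ≤ h₀ → lam ∈ L h ∧ ‖lam - c‖ ≤ C * h := by
    intro h
    by_cases hmem : h ∈ I ∧ h ≤ h₀
    · obtain ⟨hI, hh⟩ := hmem
      have hpos : 0 < h := hlat.I_pos hI
      set k : Fin n → ℤ := fun i => ⌊x₀ i / h⌋ with hkdef
      set p : Eucl n := h • intVec k with hpdef
      have hpi : ∀ i, |p i - x₀ i| ≤ h := by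
        intro i
        have hp : p i = h * (⌊x₀ i / h⌋ : ℝ) := by
          simp [hpdef, hkdef, intVec, PiLp.smul_apply, smul_eq_mul]
        have h1 : (⌊x₀ i / h⌋ : ℝ) * h ≤ x₀ i := (le_div_iff₀ hpos).1 (Int.floor_le _)
        have h2 : x₀ i < ((⌊x₀ i / h⌋ : ℝ) + 1) * h := (div_lt_iff₀ hpos).1 (Int.lt_floor_add_one _)
        rw [abs_le, hp]
        constructor <;> nlinarith
      have hnorm : ‖p - x₀‖ ≤ Real.sqrt n * h := by
        rw [EuclideanSpace.norm_eq]
        have hsum : ∑ i, ‖(p - x₀) i‖ ^ 2 ≤ (n : ℝ) * h ^ 2 := by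
          calc ∑ i, ‖(p - x₀) i‖ ^ 2 ≤ ∑ _i : Fin n, h ^ 2 := by
                apply Finset.sum_le_sum
                intro i _
                have h1 : ‖(p - x₀) i‖ ≤ h := by
                  have : (p - x₀) i = p i - x₀ i := rfl
                  rw [this, Real.norm_eq_abs]
                  exact hpi i
                nlinarith [norm_nonneg ((p - x₀) i)]
            _ = (n : ℝ) * h ^ 2 := by simp [Finset.sum_const]
        calc Real.sqrt (∑ i, ‖(p - x₀) i‖ ^ 2) ≤ Real.sqrt ((n : ℝ) * h ^ 2) :=
              Real.sqrt_le_sqrt hsum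
          _ = Real.sqrt n * h := by
              rw [Real.sqrt_mul (Nat.cast_nonneg n), Real.sqrt_sq hpos.le]
      have hh0 : h ≤ r / (Real.sqrt n + 1) := le_trans hh (min_le_right _ _)
      have hhr : h * (Real.sqrt n + 1) ≤ r := (le_div_iff₀ (by positivity)).1 hh0
      have hpball : p ∈ ball x₀ r := by
        rw [mem_ball, dist_eq_norm]
        calc ‖p - x₀‖ ≤ Real.sqrt n * h := hnorm
          _ < r := by nlinarith
      obtain ⟨lam, hlamL, hlam⟩ := hP h hI (le_trans hh (min_le_left _ _)) k hpball
      refine ⟨lam, fun _ _ => ⟨hlamL, ?_⟩⟩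
      have b1 : ‖lam - Gh h p‖ ≤ Cb 1 * h := by
        have := hlam 1
        simpa using this
      have b2 : ‖Gh h p - G0 p‖ ≤ C₂ * h := by
        have := hexp h hI p (ball_subset_closedBall hpball)
        rw [norm_iteratedFDerivWithin_zero] at this
        simpa [Finset.sum_range_one] using this
      have b3 : ‖G0 p - c‖ ≤ max Cd 0 * (Real.sqrt n * h) := by
        rw [← hGx₀]
        exact le_trans (hmvt p (ball_subset_closedBall hpball))
          (by nlinarith [norm_nonneg (p - x₀)])
      have hsplit : lam - c = (lam - Gh h p) + (Gh h p - G0 p) + (G0 p - c) := by abel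
      calc ‖lam - c‖ = ‖(lam - Gh h p) + (Gh h p - G0 p) + (G0 p - c)‖ := by rw [hsplit]
        _ ≤ ‖lam - Gh h p‖ + ‖Gh h p - G0 p‖ + ‖G0 p - c‖ := norm_add₃_le
        _ ≤ Cb 1 * h + C₂ * h + max Cd 0 * (Real.sqrt n * h) :=
            add_le_add (add_le_add b1 b2) b3
        _ ≤ C * h := by rw [hCdef]; nlinarith
    · exact ⟨0, fun hI hh => absurd ⟨hI, hh⟩ hmem⟩
  choose lamfam hfam using key
  exact ⟨C, hCpos, h₀, hh₀pos, lamfam, fun h hI hh => hfam h hI hh⟩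
end
end

section
/- (Refined ℏ-continuity.) Let 𝓘 ⊂ (0,∞) be ℏ-continuous. Then for every ε > 0 and every real N > 2 there exists ℏ₀ > 0 such that for every ℏ₁ ∈ 𝓘 with ℏ₁ ≤ ℏ₀ there exists ℏ₂ ∈ 𝓘 with ℏ₂ < ℏ₁, 1/ℏ₂ − 1/ℏ₁ < ε, and ℏ₁ − ℏ₂ ≥ ℏ₁^N. -/
/-- (Refined `ℏ`-continuity.) If `I` is `ℏ`-continuous then for every `ε > 0` and
every real `N > 2` there is `ℏ₀ > 0` such that any `ℏ₁ ∈ I` with `ℏ₁ ≤ ℏ₀` admits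
`ℏ₂ ∈ I` with `ℏ₂ < ℏ₁`, `1/ℏ₂ − 1/ℏ₁ < ε` and `ℏ₁ − ℏ₂ ≥ ℏ₁ ^ N`. -/
theorem hContinuous_refined (I : Set ℝ) (hIpos : I ⊆ Set.Ioi (0 : ℝ))
    (hcont : HContinuous I) :
    ∀ ε > 0, ∀ N : ℝ, 2 < N → ∃ h₀ > 0, ∀ h₁ ∈ I, h₁ ≤ h₀ →
      ∃ h₂ ∈ I, h₂ < h₁ ∧ 1 / h₂ - 1 / h₁ < ε ∧ h₁ ^ N ≤ h₁ - h₂ := by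
  intro ε hε N hN
  obtain ⟨h₀', hh₀', H⟩ := hcont (ε / 2) (by positivity)
  set c : ℝ := (ε / 4) ^ (1 / (N - 2) : ℝ) with hc
  have hcpos : 0 < c := Real.rpow_pos_of_pos (by positivity) _
  refine ⟨min (h₀' / 2) (min (1 / 2) c), by positivity, ?_⟩
  intro h₁ h1I h1le
  have h1pos : 0 < h₁ := hIpos h1I
  have hb1 : h₁ ≤ h₀' / 2 := le_trans h1le (min_le_left _ _)
  have hb2 : h₁ ≤ 1 / 2 := le_trans h1le (le_trans (min_le_right _ _) (min_le_left _ _))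
  have hb3 : h₁ ≤ c := le_trans h1le (le_trans (min_le_right _ _) (min_le_right _ _))
  have hN1 : h₁ ^ (N - 1 : ℝ) ≤ 1 / 2 := by
    calc h₁ ^ (N - 1 : ℝ) ≤ h₁ ^ (1 : ℝ) :=
          Real.rpow_le_rpow_of_exponent_ge h1pos (by linarith) (by linarith)
      _ = h₁ := Real.rpow_one _
      _ ≤ 1 / 2 := hb2
  have hNsplit : h₁ ^ N = h₁ ^ (N - 1 : ℝ) * h₁ := by
    rw [show N = (N - 1) + 1 by ring, Real.rpow_add h1pos, Real.rpow_one]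
    ring_nf
  have hNpos : 0 < h₁ ^ N := Real.rpow_pos_of_pos h1pos N
  have hN1pos : 0 < h₁ ^ (N - 1 : ℝ) := Real.rpow_pos_of_pos h1pos _
  have hsmall : h₁ ^ N ≤ h₁ / 2 := by
    rw [hNsplit]; nlinarith
  set a : ℝ := h₁ - h₁ ^ N with ha
  have hapos : h₁ / 2 ≤ a := by simp only [ha]; linarith
  set J : Set ℝ := closure I ∩ Set.Icc a h₁ with hJ
  have hJclosed : IsClosed J := isClosed_closure.inter isClosed_Icc
  have hJne : J.Nonempty := ⟨h₁, subset_closure h1I, ⟨by linarith, le_refl _⟩⟩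
  have hJbdd : BddBelow J := ⟨a, fun x hx => hx.2.1⟩
  set m : ℝ := sInf J with hm
  have hmJ : m ∈ J := hJclosed.csInf_mem hJne hJbdd
  have hma : a ≤ m := hmJ.2.1
  have hmh1 : m ≤ h₁ := hmJ.2.2
  have hmpos : 0 < m := lt_of_lt_of_le (by linarith) hma
  have hmlt : m < h₀' := lt_of_le_of_lt hmh1 (by linarith)
  obtain ⟨h₂, h2I, h2lt, h2eps⟩ := H m hmJ.1 hmpos hmlt
  have h2pos : 0 < h₂ := hIpos h2I
  have h2a : h₂ < a := by
    by_contra hcon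
    push_neg at hcon
    have hmem : h₂ ∈ J := ⟨subset_closure h2I, hcon, le_trans h2lt.le hmh1⟩
    exact absurd (csInf_le hJbdd hmem) (not_le.mpr h2lt)
  -- bound `h₁ ^ (N-2)` by `ε/4`
  have hcN : c ^ (N - 2 : ℝ) = ε / 4 := by
    rw [hc, ← Real.rpow_mul (by positivity), one_div, inv_mul_cancel₀ (by linarith),
      Real.rpow_one]
  have ht : h₁ ^ (N - 2 : ℝ) ≤ ε / 4 := by
    rw [← hcN]
    exact Real.rpow_le_rpow h1pos.le hb3 (by linarith)
  have hNsplit2 : h₁ ^ N = h₁ ^ (N - 2 : ℝ) * h₁ * h₁ := by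
    rw [show N = ((N - 2) + 1) + 1 by ring, Real.rpow_add h1pos, Real.rpow_add h1pos,
      Real.rpow_one]
    ring_nf
  have hmid : 1 / m - 1 / h₁ ≤ ε / 2 := by
    have heq : 1 / m - 1 / h₁ = (h₁ - m) / (m * h₁) := by
      field_simp
    rw [heq, div_le_iff₀ (by positivity)]
    have h1m : h₁ - m ≤ h₁ ^ N := by linarith
    rw [hNsplit2] at h1m
    nlinarith [mul_le_mul_of_nonneg_right ht (by positivity : (0:ℝ) ≤ h₁ * h₁),
      mul_le_mul_of_nonneg_left (show h₁ / 2 ≤ m by linarith)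
        (by positivity : (0:ℝ) ≤ ε / 2 * h₁)]
  exact ⟨h₂, h2I, lt_of_lt_of_le h2lt hmh1, by linarith, by linarith⟩
end
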